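/- Let {Π_i}_{i=1}^{d²} and {Π'_i}_{i=1}^{d²} be two SICs in dimension d ≥ 2, and let R be a real d²×d² matrix such that Π'_i = Σ_{j=1}^{d²} R_ij·Π_j for all i. Then R is orthogonal: Σ_{k=1}^{d²} R_ik·R_jk = δ_ij for all i, j. -/

import Mathlib

/-- If two SICs in dimension d ≥ 2 are related by a real matrix R via
Π'_i = Σ_j R_ij·Π_j, then R is orthogonal: Σ_k R_ik R_jk = δ_ij. -/
theorem sic_transition_orthogonal (d : ℕ) (hd : 2 ≤ d)
    (P P' : Fin (d ^ 2) → Matrix (Fin d) (Fin d) ℂ)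
    (hherm : ∀ i, (P i).IsHermitian)
    (hproj : ∀ i, P i * P i = P i)
    (hrank : ∀ i, (P i).rank = 1)
    (hsic : ∀ i j, (P i * P j).trace =
      ((d : ℂ) * (if i = j then 1 else 0) + 1) / ((d : ℂ) + 1))
    (hherm' : ∀ i, (P' i).IsHermitian)
    (hproj' : ∀ i, P' i * P' i = P' i)
    (hrank' : ∀ i, (P' i).rank = 1)
    (hsic' : ∀ i j, (P' i * P' j).trace =
      ((d : ℂ) * (if i = j then 1 else 0) + 1) / ((d : ℂ) + 1))
    (R : Matrix (Fin (d ^ 2)) (Fin (d ^ 2)) ℝ)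
    (hR : ∀ i, P' i = ∑ j, ((R i j : ℝ) : ℂ) • P j) :
    ∀ i j, ∑ k, R i k * R j k = if i = j then 1 else 0 := by
  have hd0 : (d : ℂ) ≠ 0 := Nat.cast_ne_zero.mpr (by omega)
  have hd1 : ((d : ℂ) + 1) ≠ 0 := by
    have : ((d + 1 : ℕ) : ℂ) ≠ 0 := Nat.cast_ne_zero.mpr (Nat.succ_ne_zero d)
    push_cast at this; exact this
  have htr : ∀ i, (P i).trace = 1 := by
    intro i
    have h := hsic i i
    rw [hproj i] at h
    rw [h]; simp; field_simp; exact hd1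
  have htr' : ∀ i, (P' i).trace = 1 := by
    intro i
    have h := hsic' i i
    rw [hproj' i] at h
    rw [h]; simp; field_simp; exact hd1
  have hsum : ∀ i, (∑ k, ((R i k : ℝ) : ℂ)) = 1 := by
    intro i
    calc (∑ k, ((R i k : ℝ) : ℂ)) = ∑ k, ((R i k : ℝ) : ℂ) * (P k).trace := by
          simp [htr]
      _ = (P' i).trace := by
          rw [hR i, Matrix.trace_sum]
          simp [Matrix.trace_smul, smul_eq_mul]
      _ = 1 := htr' i
  intro i j
  set a : Fin (d ^ 2) → ℂ := fun k => ((R i k : ℝ) : ℂ) with ha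
  set b : Fin (d ^ 2) → ℂ := fun k => ((R j k : ℝ) : ℂ) with hb
  -- expand trace of product
  have expand : (P' i * P' j).trace
      = (∑ k, ∑ l, a k * b l * ((d : ℂ) * (if k = l then 1 else 0) + 1)) / ((d : ℂ) + 1) := by
    rw [hR i, hR j, Finset.sum_mul_sum, Matrix.trace_sum]
    rw [Finset.sum_div]
    refine Finset.sum_congr rfl fun k _ => ?_
    rw [Matrix.trace_sum, Finset.sum_div]
    refine Finset.sum_congr rfl fun l _ => ?_
    rw [Matrix.smul_mul, Matrix.mul_smul, Matrix.trace_smul, Matrix.trace_smul, hsic k l]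
    simp only [smul_eq_mul, ha, hb]
    ring
  have inner : (∑ k, ∑ l, a k * b l * ((d : ℂ) * (if k = l then 1 else 0) + 1))
      = (d : ℂ) * (∑ k, a k * b k) + 1 := by
    have h1 : (∑ k, ∑ l, a k * b l * ((d : ℂ) * (if k = l then 1 else 0) + 1))
        = (∑ k, ∑ l, a k * b l * ((d : ℂ) * (if k = l then 1 else 0)))
          + ∑ k, ∑ l, a k * b l := by
      rw [← Finset.sum_add_distrib]
      refine Finset.sum_congr rfl fun k _ => ?_
      rw [← Finset.sum_add_distrib]
      exact Finset.sum_congr rfl fun l _ => by ring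
    rw [h1]
    have h2 : (∑ k, ∑ l, a k * b l * ((d : ℂ) * (if k = l then 1 else 0)))
        = (d : ℂ) * ∑ k, a k * b k := by
      rw [Finset.mul_sum]
      refine Finset.sum_congr rfl fun k _ => ?_
      rw [Finset.sum_eq_single k]
      · simp; ring
      · intro l _ hl; simp [Ne.symm hl]
      · simp
    have h3 : (∑ k : Fin (d ^ 2), ∑ l : Fin (d ^ 2), a k * b l) = 1 := by
      rw [← Finset.sum_mul_sum, hsum i, hsum j, one_mul]
    rw [h2, h3]
  have key : ((d : ℂ) * (if i = j then 1 else 0) + 1) / ((d : ℂ) + 1)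
      = ((d : ℂ) * (∑ k, a k * b k) + 1) / ((d : ℂ) + 1) := by
    rw [← hsic' i j, expand, inner]
  have key3 : (if i = j then (1 : ℂ) else 0) = ∑ k, a k * b k := by
    apply mul_left_cancel₀ hd0
    field_simp at key
    linear_combination key
  have hre : ((∑ k, R i k * R j k : ℝ) : ℂ) = (if i = j then 1 else 0) := by
    push_cast
    rw [← key3]
  by_cases h : i = j <;> simp [h] at hre ⊢ <;> exact_mod_cast hre
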